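/- A quantum state ρ on H is POVM-incoherent with respect to a POVM {E_i}_{i=1}^n (i.e., its canonical Naimark embedding ρ ⊗ |1⟩⟨1| is block-incoherent with respect to the canonical Naimark extension) if and only if E_i ρ E_j = 0 for all i ≠ j. -/

import Mathlib

open Matrix Kronecker Complex ComplexOrder

/-- Von Neumann entropy of a (Hermitian) matrix: S(ρ) = −Σ λ_i log λ_i over the
eigenvalues of ρ. -/
noncomputable def vN {ι : Type*} [Fintype ι] [DecidableEq ι]
    (ρ : Matrix ι ι ℂ) : ℝ :=
  if h : ρ.IsHermitian then ∑ i, Real.negMulLog (h.eigenvalues i) else 0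

private lemma cancelA {m n p : Type*} [Fintype m] [Fintype n]
    (M : Matrix m n ℂ) (N : Matrix n p ℂ) (h : Mᴴ * (M * N) = 0) : M * N = 0 := by
  rw [← Matrix.conjTranspose_mul_self_eq_zero (A := M * N)]
  calc (M * N)ᴴ * (M * N) = Nᴴ * (Mᴴ * (M * N)) := by
        rw [Matrix.conjTranspose_mul, Matrix.mul_assoc]
    _ = 0 := by rw [h, Matrix.mul_zero]

/-- A state ρ is POVM-incoherent with respect to {E_i} — i.e., its
canonical Naimark embedding ρ ⊗ |1⟩⟨1| is block-incoherent with respect to the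
canonical Naimark extension P_i = V†(1⊗|i⟩⟨i|)V — iff E_i ρ E_j = 0 for all i ≠ j. -/
theorem povm_incoherent_iff (d n : ℕ) [NeZero n]
    (E A : Fin n → Matrix (Fin d) (Fin d) ℂ)
    (hE : ∀ i, E i = (A i)ᴴ * A i)
    (hsum : ∑ i, E i = 1)
    (V : Matrix (Fin d × Fin n) (Fin d × Fin n) ℂ)
    (hV : Vᴴ * V = 1)
    (hact : ∀ X : Matrix (Fin d) (Fin d) ℂ,
      V * (X ⊗ₖ Matrix.single (0 : Fin n) (0 : Fin n) (1 : ℂ)) * Vᴴ =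
        ∑ i, ∑ j, (A i * X * (A j)ᴴ) ⊗ₖ Matrix.single i j (1 : ℂ))
    (P : Fin n → Matrix (Fin d × Fin n) (Fin d × Fin n) ℂ)
    (hP : ∀ i, P i = Vᴴ * ((1 : Matrix (Fin d) (Fin d) ℂ) ⊗ₖ
      Matrix.single i i (1 : ℂ)) * V)
    (ρ : Matrix (Fin d) (Fin d) ℂ) (hρ : ρ.PosSemidef) (htr : ρ.trace = 1) :
    (∑ k, P k * (ρ ⊗ₖ Matrix.single (0 : Fin n) (0 : Fin n) (1 : ℂ)) * P k =
      ρ ⊗ₖ Matrix.single (0 : Fin n) (0 : Fin n) (1 : ℂ)) ↔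
    (∀ i j, i ≠ j → E i * ρ * E j = 0) := by
  set σ : Matrix (Fin d × Fin n) (Fin d × Fin n) ℂ :=
    ρ ⊗ₖ Matrix.single (0 : Fin n) (0 : Fin n) (1 : ℂ) with hσdef
  set Q : Fin n → Matrix (Fin d × Fin n) (Fin d × Fin n) ℂ :=
    fun k => (1 : Matrix (Fin d) (Fin d) ℂ) ⊗ₖ Matrix.single k k (1 : ℂ) with hQdef
  have hVV : V * Vᴴ = 1 := mul_eq_one_comm.mp hV
  -- Step 1: the middle computation  Q k (VσVᴴ) Q k = (A k ρ A kᴴ) ⊗ |k⟩⟨k|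
  have hterm : ∀ k i j : Fin n,
      Q k * ((A i * ρ * (A j)ᴴ) ⊗ₖ Matrix.single i j (1 : ℂ)) * Q k =
      if i = k ∧ j = k then (A k * ρ * (A k)ᴴ) ⊗ₖ Matrix.single k k (1 : ℂ)
      else 0 := by
    intro k i j
    rw [hQdef]
    simp only
    rw [← Matrix.mul_kronecker_mul, ← Matrix.mul_kronecker_mul]
    by_cases hik : i = k
    · subst hik
      by_cases hjk : j = i
      · subst hjk
        simp [Matrix.single_mul_single_same]
      · have hz : Matrix.single i i (1 : ℂ) * Matrix.single i j (1 : ℂ) *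
            Matrix.single i i (1 : ℂ) = 0 := by
          rw [Matrix.single_mul_single_same,
            Matrix.single_mul_single_of_ne _ _ _ _ hjk]
        rw [hz]
        simp [hjk]
    · have hz : Matrix.single k k (1 : ℂ) * Matrix.single i j (1 : ℂ) = 0 :=
        Matrix.single_mul_single_of_ne _ _ _ _ (fun h => hik h.symm) _
      rw [hz, Matrix.zero_mul]
      simp [hik]
  have hQS : ∀ k, Q k * (V * σ * Vᴴ) * Q k =
      (A k * ρ * (A k)ᴴ) ⊗ₖ Matrix.single k k (1 : ℂ) := by
    intro k
    rw [hσdef, hact]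
    simp only [Finset.mul_sum, Finset.sum_mul]
    have hrow : ∀ i ∈ Finset.univ, (∑ j, Q k *
        ((A i * ρ * (A j)ᴴ) ⊗ₖ Matrix.single i j (1 : ℂ)) * Q k)
        = if i = k then (A k * ρ * (A k)ᴴ) ⊗ₖ Matrix.single k k (1 : ℂ) else 0 := by
      intro i _
      rw [Finset.sum_congr rfl (fun j _ => hterm k i j)]
      by_cases hik : i = k <;> simp [hik]
    rw [Finset.sum_congr rfl hrow]
    simp
  -- Step 2: rewrite the LHS sum
  have hL : ∑ k, P k * σ * P k =
      Vᴴ * (∑ k, (A k * ρ * (A k)ᴴ) ⊗ₖ Matrix.single k k (1 : ℂ)) * V := by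
    simp only [Finset.mul_sum, Finset.sum_mul]
    refine Finset.sum_congr rfl fun k _ => ?_
    rw [hP k]
    calc Vᴴ * Q k * V * σ * (Vᴴ * Q k * V)
        = Vᴴ * (Q k * (V * σ * Vᴴ) * Q k) * V := by
          simp only [Matrix.mul_assoc]
      _ = Vᴴ * ((A k * ρ * (A k)ᴴ) ⊗ₖ Matrix.single k k (1 : ℂ)) * V := by
          rw [hQS k]
  have hσconj : σ = Vᴴ * (V * σ * Vᴴ) * V := by
    calc σ = (Vᴴ * V) * σ * (Vᴴ * V) := by rw [hV]; simp
      _ = Vᴴ * (V * σ * Vᴴ) * V := by simp only [Matrix.mul_assoc]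
  have hconj : ∀ Y Z : Matrix (Fin d × Fin n) (Fin d × Fin n) ℂ,
      Vᴴ * Y * V = Vᴴ * Z * V ↔ Y = Z := by
    intro Y Z
    constructor
    · intro h
      have key : ∀ W : Matrix (Fin d × Fin n) (Fin d × Fin n) ℂ,
          V * (Vᴴ * W * V) * Vᴴ = W := by
        intro W
        calc V * (Vᴴ * W * V) * Vᴴ = (V * Vᴴ) * W * (V * Vᴴ) := by
              simp only [Matrix.mul_assoc]
          _ = W := by rw [hVV]; simp
      have h2 := congrArg (fun M => V * M * Vᴴ) h
      simpa only [key] using h2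
    · intro h; rw [h]
  -- Step 3: reduce to the off-diagonal block condition
  have hmain : (∑ k, P k * σ * P k = σ) ↔
      (∀ i j, i ≠ j → A i * ρ * (A j)ᴴ = 0) := by
    rw [hL]
    nth_rewrite 1 [hσconj]
    rw [hconj, hσdef, hact]
    constructor
    · intro h i j hij
      ext a b
      have h2 := congrFun (congrFun h (a, i)) (b, j)
      simp only [Matrix.sum_apply, Matrix.kroneckerMap_apply, Matrix.single,
        Matrix.of_apply, mul_ite, mul_one, mul_zero] at h2
      have hL0 : (∑ k, if k = i ∧ k = j then (A k * ρ * (A k)ᴴ) a b else 0) = 0 :=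
        Finset.sum_eq_zero fun k _ => by
          have hk : ¬(k = i ∧ k = j) := fun ⟨h4, h5⟩ => hij (h4.symm.trans h5)
          simp [hk]
      have hR0 : (∑ p, ∑ q, if p = i ∧ q = j then (A p * ρ * (A q)ᴴ) a b else 0)
          = (A i * ρ * (A j)ᴴ) a b := by
        rw [Finset.sum_eq_single i (fun p _ hp => Finset.sum_eq_zero fun q _ => by
            simp [hp]) (fun h5 => absurd (Finset.mem_univ i) h5)]
        rw [Finset.sum_eq_single j (fun q _ hq => by simp [hq])
          (fun h5 => absurd (Finset.mem_univ j) h5)]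
        simp
      rw [hL0, hR0] at h2
      rw [Matrix.zero_apply]
      exact h2.symm
    · intro h
      symm
      refine Finset.sum_congr rfl fun i _ => ?_
      rw [Finset.sum_eq_single i (fun j _ hji => by rw [h i j (Ne.symm hji)]; simp)
        (fun h5 => absurd (Finset.mem_univ i) h5)]
  rw [hmain]
  -- Step 4: A i ρ A jᴴ = 0 ↔ E i ρ E j = 0
  constructor
  · intro h i j hij
    rw [hE i, hE j]
    have hassoc : (A i)ᴴ * A i * ρ * ((A j)ᴴ * A j) =
        (A i)ᴴ * (A i * ρ * (A j)ᴴ) * A j := by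
      simp only [Matrix.mul_assoc]
    rw [hassoc, h i j hij]
    simp
  · intro h i j hij
    have hEji := h j i (Ne.symm hij)
    rw [hE j, hE i] at hEji
    have h1 : (A j)ᴴ * (A j * (ρ * ((A i)ᴴ * A i))) = 0 := by
      calc (A j)ᴴ * (A j * (ρ * ((A i)ᴴ * A i)))
          = (A j)ᴴ * A j * ρ * ((A i)ᴴ * A i) := by simp only [Matrix.mul_assoc]
        _ = 0 := hEji
    have h2 : A j * (ρ * ((A i)ᴴ * A i)) = 0 := cancelA _ _ h1
    have h3 : (A i)ᴴ * (A i * (ρ * (A j)ᴴ)) = 0 := by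
      have hct := congrArg Matrix.conjTranspose h2
      simp only [Matrix.conjTranspose_mul, Matrix.conjTranspose_conjTranspose,
        Matrix.conjTranspose_zero, hρ.isHermitian.eq] at hct
      calc (A i)ᴴ * (A i * (ρ * (A j)ᴴ)) = (A i)ᴴ * A i * ρ * (A j)ᴴ := by
            simp only [Matrix.mul_assoc]
        _ = 0 := by
            simpa only [Matrix.mul_assoc] using hct
    have h4 : A i * (ρ * (A j)ᴴ) = 0 := cancelA _ _ h3
    calc A i * ρ * (A j)ᴴ = A i * (ρ * (A j)ᴴ) := by rw [Matrix.mul_assoc]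
      _ = 0 := h4
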